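/- arXiv:1010.3536 — 2 statements merged into one kernel-verified Lean document; each statement's English description precedes it below -/
import Mathlib

section
/- Let H be an imprimitive permutation group on a finite set Ω with a minimal block of imprimitivity Δ ⊆ Ω; put K = H^Δ_Δ, d = |Δ|, n = |Ω|, and let L be the permutation group induced by H on the system of blocks {Δ^h : h ∈ H}, a set of size s = n/d. Suppose that (i) K is a relation group on Δ and has a regular set of size r_Δ with 2·r_Δ ≠ d, and (ii) L is a relation group on the s blocks and has a regular set. Then every subgroup of H is a relation group on Ω. -/
open Pointwise MulAction

/-- The invariance group `G(R)` of an unordered relation `R` on `Ω`: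
all permutations `g` such that `x ∈ R` implies `g • x ∈ R`. -/
def invGroup {Ω : Type*} [Fintype Ω] [DecidableEq Ω] (R : Set (Finset Ω)) :
    Subgroup (Equiv.Perm Ω) where
  carrier := {g | ∀ x ∈ R, g • x ∈ R}
  one_mem' := fun x hx => by simpa using hx
  mul_mem' := fun ha hb x hx => by rw [mul_smul]; exact ha _ (hb _ hx)
  inv_mem' := by
    intro g hg x hx
    have himg : (fun y : Finset _ => g • y) '' R ⊆ R := by
      rintro - ⟨y, hy, rfl⟩; exact hg y hy
    have heq : (fun y : Finset _ => g • y) '' R = R := by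
      apply Set.eq_of_subset_of_ncard_le himg _ (Set.toFinite R)
      rw [Set.ncard_image_of_injective _ (MulAction.injective g)]
    rw [← heq] at hx
    obtain ⟨y, hy, hxy⟩ := hx
    have : g⁻¹ • x = y := by rw [← hxy]; simp
    rwa [this]

/-- A permutation group on `Ω` is a relation group if it is the invariance group
of some unordered relation on `Ω`. -/
def IsRelationGroup {Ω : Type*} [Fintype Ω] [DecidableEq Ω]
    (G : Subgroup (Equiv.Perm Ω)) : Prop :=
  ∃ R : Set (Finset Ω), G = invGroup R

/-- `w` is a regular set for `G`: only the identity of `G` stabilizes `w` setwise. -/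
def IsRegularSet {Ω : Type*} [DecidableEq Ω] (G : Subgroup (Equiv.Perm Ω))
    (w : Finset Ω) : Prop :=
  ∀ g ∈ G, g • w = w → g = 1

/-- The arity of a relation: the set of cardinalities of its members. -/
def arity {Ω : Type*} (R : Set (Finset Ω)) : Set ℕ := {n | ∃ x ∈ R, x.card = n}

/-- `G` is orbit closed: every permutation mapping each finite subset into its
`G`-orbit already lies in `G`. -/
def IsOrbitClosed {Ω : Type*} [DecidableEq Ω] (G : Subgroup (Equiv.Perm Ω)) : Prop :=
  ∀ g : Equiv.Perm Ω, (∀ x : Finset Ω, ∃ h ∈ G, g • x = h • x) → g ∈ G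

/-- `G` is set-transitive: transitive on `k`-element subsets for every `k`. -/
def IsSetTransitive {Ω : Type*} [DecidableEq Ω] (G : Subgroup (Equiv.Perm Ω)) : Prop :=
  ∀ x y : Finset Ω, x.card = y.card → ∃ g ∈ G, g • x = y

/-- A permutation group is primitive if it is transitive and every block of the
action is trivial (a subsingleton or the whole set). -/
def IsPrimitivePermGroup {Ω : Type*} (G : Subgroup (Equiv.Perm Ω)) : Prop :=
  MulAction.IsPretransitive ↥G Ω ∧
    ∀ B : Set Ω, MulAction.IsBlock ↥G B → B.Subsingleton ∨ B = Set.univ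

/-- Restriction of the setwise stabilizer of a finite set `Δ` to a permutation group on `Δ`. -/
def restrictHom {Ω : Type*} [DecidableEq Ω] (Δ : Finset Ω) :
    ↥(MulAction.stabilizer (Equiv.Perm Ω) Δ) →* Equiv.Perm {x // x ∈ Δ} where
  toFun h := Equiv.Perm.subtypePerm h.1 (fun x => by
    constructor
    · intro hx
      have h2 : h.1 • x ∈ h.1 • Δ := by rw [h.2]; exact hx
      exact (Finset.smul_mem_smul_finset_iff h.1).mp h2
    · intro hx
      have := Finset.smul_mem_smul_finset (a := h.1) hx
      rwa [h.2] at this)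
  map_one' := rfl
  map_mul' _ _ := rfl

/-- The group `H^Δ_Δ` induced on `Δ` by the setwise stabilizer of `Δ` in `H`. -/
def inducedGroup {Ω : Type*} [DecidableEq Ω] (H : Subgroup (Equiv.Perm Ω)) (Δ : Finset Ω) :
    Subgroup (Equiv.Perm {x // x ∈ Δ}) :=
  Subgroup.map (restrictHom Δ)
    ((H ⊓ MulAction.stabilizer (Equiv.Perm Ω) Δ).subgroupOf
      (MulAction.stabilizer (Equiv.Perm Ω) Δ))

/-- A `Fintype` instance for subsets of a finite type. -/
noncomputable instance (priority := low) {α : Type*} [Finite α] (s : Set α) :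
    Fintype ↥s :=
  (Set.toFinite s).fintype


namespace Aux63

open Pointwise

/-- Subtype of blocks. -/
abbrev BlkT {Ω : Type*} [Fintype Ω] [DecidableEq Ω] (H : Subgroup (Equiv.Perm Ω))
    (Δ : Finset Ω) := ↥(MulAction.orbit ↥H Δ)

variable {Ω : Type*} [Fintype Ω] [DecidableEq Ω]

lemma mem_invGroup {R : Set (Finset Ω)} {g : Equiv.Perm Ω} :
    g ∈ invGroup R ↔ ∀ x ∈ R, g • x ∈ R := Iff.rfl

lemma invGroup_inv_smul_mem {R : Set (Finset Ω)} {g : Equiv.Perm Ω}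
    (hg : g ∈ invGroup R) {x : Finset Ω} (hx : g • x ∈ R) : x ∈ R := by
  have h2 := (invGroup R).inv_mem hg
  have h3 := mem_invGroup.mp h2 _ hx
  simpa using h3

/-- Lift a finset of the subtype of `Δ` to a finset of `Ω`. -/
def lift {Ω : Type*} [DecidableEq Ω] (Δ : Finset Ω) (x : Finset {y // y ∈ Δ}) : Finset Ω :=
  x.image Subtype.val

lemma lift_subset {Ω : Type*} [DecidableEq Ω] (Δ : Finset Ω) (x : Finset {y // y ∈ Δ}) :
    lift Δ x ⊆ Δ := by
  intro ω hω
  obtain ⟨δ, _, rfl⟩ := Finset.mem_image.mp hω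
  exact δ.2

lemma lift_card {Ω : Type*} [DecidableEq Ω] (Δ : Finset Ω) (x : Finset {y // y ∈ Δ}) :
    (lift Δ x).card = x.card :=
  Finset.card_image_of_injective _ Subtype.val_injective

lemma lift_inj {Ω : Type*} [DecidableEq Ω] (Δ : Finset Ω) {x y : Finset {y // y ∈ Δ}}
    (h : lift Δ x = lift Δ y) : x = y := by
  ext δ
  constructor
  · intro hδ
    have : (δ : Ω) ∈ lift Δ y := h ▸ Finset.mem_image_of_mem _ hδ
    obtain ⟨δ', hδ', he⟩ := Finset.mem_image.mp this
    rwa [← Subtype.ext he]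
  · intro hδ
    have : (δ : Ω) ∈ lift Δ x := h ▸ Finset.mem_image_of_mem _ hδ
    obtain ⟨δ', hδ', he⟩ := Finset.mem_image.mp this
    rwa [← Subtype.ext he]

lemma lift_univ {Ω : Type*} [DecidableEq Ω] (Δ : Finset Ω) :
    lift Δ (Finset.univ : Finset {y // y ∈ Δ}) = Δ := by
  rw [lift, Finset.univ_eq_attach, Finset.attach_image_val]

lemma lift_sdiff {Ω : Type*} [DecidableEq Ω] (Δ : Finset Ω) (x y : Finset {y // y ∈ Δ}) :
    lift Δ (x \ y) = lift Δ x \ lift Δ y := by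
  simp only [lift]
  exact Finset.image_sdiff _ _ Subtype.val_injective

lemma lift_singleton {Ω : Type*} [DecidableEq Ω] (Δ : Finset Ω) (δ : {y // y ∈ Δ}) :
    lift Δ ({δ} : Finset {y // y ∈ Δ}) = {(δ : Ω)} := by
  simp [lift]

lemma lift_smul {Ω : Type*} [DecidableEq Ω] (Δ : Finset Ω) (τ : Equiv.Perm Ω)
    (hτ : ∀ x : Ω, τ x ∈ Δ ↔ x ∈ Δ) (x : Finset {y // y ∈ Δ}) :
    τ • lift Δ x = lift Δ ((Equiv.Perm.subtypePerm τ hτ) • x) := by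
  simp only [lift, Finset.smul_finset_def, Finset.image_image]
  rfl

lemma restrictHom_lift {Ω : Type*} [DecidableEq Ω] (Δ : Finset Ω)
    (τ : ↥(MulAction.stabilizer (Equiv.Perm Ω) Δ)) (x : Finset {y // y ∈ Δ}) :
    (τ : Equiv.Perm Ω) • lift Δ x = lift Δ ((restrictHom Δ τ) • x) := by
  have hiff : ∀ ω : Ω, ω ∈ Δ ↔ (τ : Equiv.Perm Ω) ω ∈ Δ := by
    intro ω
    constructor
    · intro hx
      have := Finset.smul_mem_smul_finset (a := (τ : Equiv.Perm Ω)) hx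
      rwa [τ.2] at this
    · intro hx
      have h2 : (τ : Equiv.Perm Ω) • ω ∈ (τ : Equiv.Perm Ω) • Δ := by
        rw [τ.2]; exact hx
      exact (Finset.smul_mem_smul_finset_iff _).mp h2
  rw [lift_smul Δ _ (fun ω => (hiff ω).symm)]
  rfl

end Aux63

open Aux63

set_option maxHeartbeats 2000000

/-- Theorem 6.3: let `H` be imprimitive on `Ω` with minimal block of
imprimitivity `Δ`, let `K = H^Δ_Δ` and let `L` be the group induced by `H` on
the system of blocks `{Δ^h : h ∈ H}` (the orbit of `Δ`).  If `K` is a relation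
group with a regular set of size `r_Δ`, `2 r_Δ ≠ |Δ|`, and `L` is a relation
group with a regular set, then every subgroup of `H` is a relation group. -/
theorem subgroups_isRelationGroup_of_block_system {Ω : Type*} [Fintype Ω] [DecidableEq Ω]
    (H : Subgroup (Equiv.Perm Ω))
    (htrans : MulAction.IsPretransitive ↥H Ω) (himpr : ¬ IsPrimitivePermGroup H)
    (Δ : Finset Ω) (hblock : MulAction.IsBlock ↥H (↑Δ : Set Ω))
    (h1 : 1 < Δ.card) (h2 : Δ.card < Fintype.card Ω)
    (hmin : ∀ B : Finset Ω, MulAction.IsBlock ↥H (↑B : Set Ω) → B ⊆ Δ → B ≠ Δ →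
      B.card ≤ 1)
    (hKrel : IsRelationGroup (inducedGroup H Δ))
    (wΔ : Finset {x // x ∈ Δ}) (hwΔ : IsRegularSet (inducedGroup H Δ) wΔ)
    (hhalf : 2 * wΔ.card ≠ Δ.card)
    (L : Subgroup (Equiv.Perm ↥(MulAction.orbit ↥H Δ)))
    (hL : L = (MulAction.toPermHom ↥H ↥(MulAction.orbit ↥H Δ)).range)
    (hLrel : IsRelationGroup L)
    (hLreg : ∃ wΓ : Finset ↥(MulAction.orbit ↥H Δ), IsRegularSet L wΓ)
    (G : Subgroup (Equiv.Perm Ω)) (hG : G ≤ H) :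
    IsRelationGroup G := by
  obtain ⟨RK, hRK⟩ := hKrel
  obtain ⟨RL, hRL⟩ := hLrel
  obtain ⟨wΓ, hwΓ⟩ := hLreg
  have hLrange : invGroup RL = (MulAction.toPermHom ↥H ↥(MulAction.orbit ↥H Δ)).range := by
    rw [← hRL, hL]
  have hwΓreg : ∀ pb, pb ∈ invGroup RL → pb • wΓ = wΓ → pb = 1 := by
    intro pb hpb
    refine hwΓ pb ?_
    rw [hRL]
    exact hpb
  set d : ℕ := Δ.card with hd
  set n : ℕ := Fintype.card Ω with hn
  set r : ℕ := wΔ.card with hr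
  -- basic facts about blocks
  have hcardblk : ∀ γ ∈ MulAction.orbit ↥H Δ, γ.card = d := by
    rintro γ hγ
    obtain ⟨c, rfl⟩ := MulAction.mem_orbit_iff.mp hγ
    exact Finset.card_smul_finset _ _
  have hdisj : ∀ γ ∈ MulAction.orbit ↥H Δ, ∀ γ' ∈ MulAction.orbit ↥H Δ,
      γ ≠ γ' → Disjoint γ γ' := by
    rintro γ hγ γ' hγ' hne
    obtain ⟨c, rfl⟩ := MulAction.mem_orbit_iff.mp hγ
    obtain ⟨c', rfl⟩ := MulAction.mem_orbit_iff.mp hγ'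
    rw [← Finset.disjoint_coe, Finset.coe_smul_finset, Finset.coe_smul_finset]
    refine hblock ?_
    intro he
    apply hne
    apply Finset.coe_injective
    rw [Finset.coe_smul_finset, Finset.coe_smul_finset, he]
  have hΔmem : Δ ∈ MulAction.orbit ↥H Δ := MulAction.mem_orbit_self Δ
  have hΔne : Δ.Nonempty := Finset.card_pos.mp (by omega)
  obtain ⟨δ0, hδ0⟩ := hΔne
  have hcover : ∀ ω : Ω, ∃ γ ∈ MulAction.orbit ↥H Δ, ω ∈ γ := by
    intro ω
    obtain ⟨h, hh⟩ := htrans.exists_smul_eq δ0 ω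
    refine ⟨h • Δ, MulAction.mem_orbit _ _, ?_⟩
    have := Finset.smul_mem_smul_finset (a := h) hδ0
    rwa [hh] at this
  have hHblk : ∀ h : Equiv.Perm Ω, h ∈ H → ∀ γ ∈ MulAction.orbit ↥H Δ,
      h • γ ∈ MulAction.orbit ↥H Δ := by
    intro h hh γ hγ
    obtain ⟨c, rfl⟩ := MulAction.mem_orbit_iff.mp hγ
    exact MulAction.mem_orbit_iff.mpr ⟨⟨h, hh⟩ * c, by rw [mul_smul]; rfl⟩
  have hexne : ∀ γ ∈ MulAction.orbit ↥H Δ, ∃ γ' ∈ MulAction.orbit ↥H Δ, γ' ≠ γ := by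
    intro γ hγ
    have hlt : γ.card < n := by rw [hcardblk γ hγ]; omega
    obtain ⟨ω, hω⟩ : ∃ ω, ω ∉ γ := by
      by_contra hcon
      push_neg at hcon
      have : γ = Finset.univ := Finset.eq_univ_iff_forall.mpr hcon
      rw [this, Finset.card_univ] at hlt
      omega
    obtain ⟨γ', hγ', hm⟩ := hcover ω
    exact ⟨γ', hγ', fun he => hω (he ▸ hm)⟩
  have h2d : 2 * d ≤ n := by
    obtain ⟨γ', hγ', hne⟩ := hexne Δ hΔmem
    have hdd := hdisj _ hγ' _ hΔmem hne
    have hun : (γ' ∪ Δ).card = γ'.card + Δ.card := Finset.card_union_of_disjoint hdd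
    have hle : (γ' ∪ Δ).card ≤ n := Finset.card_le_univ _
    rw [hun, hcardblk _ hγ'] at hle
    omega
  have hbiu : (Finset.univ : Finset (BlkT H Δ)).biUnion (fun γ => γ.1) = Finset.univ := by
    apply Finset.eq_univ_of_forall
    intro ω
    rw [Finset.mem_biUnion]
    obtain ⟨γ, hγ, hm⟩ := hcover ω
    exact ⟨⟨γ, hγ⟩, Finset.mem_univ _, hm⟩
  have hpairwise : ∀ x ∈ (Finset.univ : Finset (BlkT H Δ)), ∀ y ∈ (Finset.univ : Finset (BlkT H Δ)),
      x ≠ y → Disjoint x.1 y.1 :=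
    fun x _ y _ hxy => hdisj _ x.2 _ y.2 (fun h => hxy (Subtype.ext h))
  have hns : n = (Fintype.card (BlkT H Δ)) * d := by
    rw [hn, ← Finset.card_univ (α := Ω), ← hbiu, Finset.card_biUnion hpairwise,
      Finset.sum_congr rfl (fun γ _ => hcardblk _ γ.2), Finset.sum_const, Finset.card_univ,
      smul_eq_mul]
  have hs2 : 2 ≤ Fintype.card (BlkT H Δ) := by
    obtain ⟨γ', hγ', hne⟩ := hexne Δ hΔmem
    have h11 : 1 < Fintype.card (BlkT H Δ) :=
      Fintype.one_lt_card_iff.mpr ⟨⟨γ', hγ'⟩, ⟨Δ, hΔmem⟩, fun he => hne (congrArg Subtype.val he)⟩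
    omega
  have hn23 : n = 2 * d ∨ 3 * d ≤ n := by
    rcases Nat.lt_or_ge (Fintype.card (BlkT H Δ)) 3 with hlt | hge
    · left
      have : Fintype.card (BlkT H Δ) = 2 := by omega
      rw [hns, this]
    · right
      rw [hns]
      exact Nat.mul_le_mul_right d hge
  -- K transitivity
  have hKtrans : ∀ a b : {x // x ∈ Δ}, ∃ σ ∈ inducedGroup H Δ, σ a = b := by
    intro a b
    obtain ⟨h, hh⟩ := htrans.exists_smul_eq (a : Ω) (b : Ω)
    have hstab : (h : Equiv.Perm Ω) • Δ = Δ := by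
      by_contra hne
      have hdd := hdisj _ (MulAction.mem_orbit Δ h) _ hΔmem
        (by intro he; exact hne he)
      have hb1 : (b : Ω) ∈ h • Δ := by
        have := Finset.smul_mem_smul_finset (a := h) a.2
        rwa [hh] at this
      exact Finset.disjoint_left.mp hdd hb1 b.2
    have hmem : (h : Equiv.Perm Ω) ∈ MulAction.stabilizer (Equiv.Perm Ω) Δ := hstab
    refine ⟨restrictHom Δ ⟨(h : Equiv.Perm Ω), hmem⟩, ?_, ?_⟩
    · exact Subgroup.mem_map.mpr ⟨⟨_, hmem⟩, Subgroup.mem_subgroupOf.mpr ⟨h.2, hmem⟩, rfl⟩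
    · exact Subtype.ext hh
  -- bounds on r
  have hwΔne : wΔ.Nonempty := by
    rcases Finset.eq_empty_or_nonempty wΔ with he | hne
    · exfalso
      have hΔ2 : 1 < Fintype.card {x // x ∈ Δ} := by rw [Fintype.card_coe]; omega
      obtain ⟨a, b, hab⟩ := Fintype.one_lt_card_iff.mp hΔ2
      obtain ⟨σ', hσ', hab'⟩ := hKtrans a b
      have := hwΔ σ' hσ' (by rw [he]; exact Finset.smul_finset_empty σ')
      rw [this] at hab'
      simp at hab'
      exact hab hab'
    · exact hne
  have hwΔnuniv : wΔ ≠ Finset.univ := by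
    intro he
    have hΔ2 : 1 < Fintype.card {x // x ∈ Δ} := by rw [Fintype.card_coe]; omega
    obtain ⟨a, b, hab⟩ := Fintype.one_lt_card_iff.mp hΔ2
    obtain ⟨σ', hσ', hab'⟩ := hKtrans a b
    have := hwΔ σ' hσ' (by rw [he]; exact Finset.smul_finset_univ)
    rw [this] at hab'
    simp at hab'
    exact hab hab'
  have hr1 : 1 ≤ r := by
    rw [hr]
    exact Finset.card_pos.mpr hwΔne
  have hrd : r ≤ d - 1 := by
    have : wΔ.card < Fintype.card {x // x ∈ Δ} := Finset.card_lt_card (Finset.ssubset_univ_iff.mpr hwΔnuniv)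
    rw [Fintype.card_coe] at this
    omega
  have hd3 : 3 ≤ d := by omega
  -- normalized relation for K
  set S : Set (Finset {x // x ∈ Δ}) := {x | x ∈ RK ∧ x ≠ ∅ ∧ x ≠ Finset.univ} with hSdef
  have hKS : ∀ σ, σ ∈ invGroup RK → ∀ x ∈ S, σ • x ∈ S := by
    intro σ hσ x hx
    refine ⟨hσ x hx.1, ?_, ?_⟩
    · have : (σ • x).Nonempty := Finset.smul_finset_nonempty.mpr
        (Finset.nonempty_iff_ne_empty.mpr hx.2.1)
      exact Finset.nonempty_iff_ne_empty.mp this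
    · intro he
      apply hx.2.2
      have hcx : (σ • x).card = x.card := Finset.card_smul_finset _ _
      rw [he, Finset.card_univ] at hcx
      exact Finset.eq_univ_of_card _ hcx.symm
  have hxbounds : ∀ x ∈ S, 1 ≤ x.card ∧ x.card ≤ d - 1 := by
    intro x hx
    constructor
    · rw [Nat.one_le_iff_ne_zero]
      simp only [ne_eq, Finset.card_eq_zero]
      exact hx.2.1
    · have : x.card < Fintype.card {y // y ∈ Δ} :=
        Finset.card_lt_card (Finset.ssubset_univ_iff.mpr hx.2.2)
      rw [Fintype.card_coe] at this
      omega
  have hsingS : (∃ x ∈ S, x.card = 1) → ∀ δ : {y // y ∈ Δ}, ({δ} : Finset {y // y ∈ Δ}) ∈ S := by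
    rintro ⟨x, hx, hc⟩ δ
    obtain ⟨δ0', rfl⟩ := Finset.card_eq_one.mp hc
    obtain ⟨σ, hσK, hσ⟩ := hKtrans δ0' δ
    have hσinv : σ ∈ invGroup RK := by rw [← hRK]; exact hσK
    have h2' := hKS σ hσinv _ hx
    rwa [Finset.smul_finset_singleton, show σ • δ0' = δ from hσ] at h2'
  -- block representatives
  have hrepex : ∀ γ : BlkT H Δ, ∃ c : ↥H, c • Δ = γ.1 := fun γ => MulAction.mem_orbit_iff.mp γ.2
  choose rep hrep using hrepex
  -- the building blocks of the regular set
  set A : BlkT H Δ → Finset Ω := fun γ => ((rep γ : Equiv.Perm Ω)) • lift Δ wΔ with hA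
  have hAsub : ∀ γ : BlkT H Δ, A γ ⊆ γ.1 := by
    intro γ
    rw [← hrep γ]
    exact Finset.smul_finset_subset_smul_finset_iff.mpr (lift_subset Δ wΔ)
  have hAcard : ∀ γ : BlkT H Δ, (A γ).card = r := by
    intro γ
    rw [hA]
    simp only []
    rw [Finset.card_smul_finset, lift_card, hr]
  set Wof : Finset (BlkT H Δ) → Finset Ω :=
    fun P => Finset.univ.biUnion (fun γ => if γ ∈ P then A γ else γ.1 \ A γ) with hWof
  have hpiece_sub : ∀ (P : Finset (BlkT H Δ)) γ, (if γ ∈ P then A γ else γ.1 \ A γ) ⊆ γ.1 := by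
    intro P γ
    split
    · exact hAsub γ
    · exact Finset.sdiff_subset
  have hWmem : ∀ (P : Finset (BlkT H Δ)) (ω : Ω) (γ : BlkT H Δ), ω ∈ γ.1 →
      (ω ∈ Wof P ↔ ω ∈ (if γ ∈ P then A γ else γ.1 \ A γ)) := by
    intro P ω γ hω
    constructor
    · intro hmem
      rw [hWof] at hmem
      obtain ⟨γ', _, hm⟩ := Finset.mem_biUnion.mp hmem
      have hγ' : ω ∈ γ'.1 := hpiece_sub P γ' hm
      by_cases he : γ' = γ
      · rwa [he] at hm
      · exact absurd hω (Finset.disjoint_left.mp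
          (hdisj _ γ'.2 _ γ.2 (fun h => he (Subtype.ext h))) hγ')
    · intro hmem
      rw [hWof]
      exact Finset.mem_biUnion.mpr ⟨γ, Finset.mem_univ _, hmem⟩
  have hWinter : ∀ (P : Finset (BlkT H Δ)) (γ : BlkT H Δ),
      Wof P ∩ γ.1 = (if γ ∈ P then A γ else γ.1 \ A γ) := by
    intro P γ
    ext ω
    rw [Finset.mem_inter]
    constructor
    · rintro ⟨hw, hγ⟩
      exact (hWmem P ω γ hγ).mp hw
    · intro hm
      have hγ : ω ∈ γ.1 := hpiece_sub P γ hm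
      exact ⟨(hWmem P ω γ hγ).mpr hm, hγ⟩
  -- the two variants cover Ω disjointly
  have hWunion : ∀ ω : Ω, ∀ γ : BlkT H Δ, ω ∈ γ.1 → (ω ∈ Wof wΓ ↔ ω ∉ Wof wΓᶜ) := by
    intro ω γ hω
    rw [hWmem wΓ ω γ hω, hWmem wΓᶜ ω γ hω]
    by_cases hγ : γ ∈ wΓ
    · rw [if_pos hγ, if_neg (show γ ∉ wΓᶜ by simpa using hγ)]
      constructor
      · intro h hc
        exact (Finset.mem_sdiff.mp hc).2 h
      · intro h
        by_contra hA'
        exact h (Finset.mem_sdiff.mpr ⟨hω, hA'⟩)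
    · rw [if_neg hγ, if_pos (Finset.mem_compl.mpr hγ)]
      constructor
      · intro h hc
        exact (Finset.mem_sdiff.mp h).2 hc
      · intro h
        exact Finset.mem_sdiff.mpr ⟨hω, h⟩
  have hsum : (Wof wΓ).card + (Wof wΓᶜ).card = n := by
    have hdisjW : Disjoint (Wof wΓ) (Wof wΓᶜ) := by
      rw [Finset.disjoint_left]
      intro ω hω1 hω2
      obtain ⟨γ, hγ, hm⟩ := hcover ω
      exact ((hWunion ω ⟨γ, hγ⟩ hm).mp hω1) hω2
    have huniv : Wof wΓ ∪ Wof wΓᶜ = Finset.univ := by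
      apply Finset.eq_univ_of_forall
      intro ω
      obtain ⟨γ, hγ, hm⟩ := hcover ω
      rcases (em (ω ∈ Wof wΓ)) with h | h
      · exact Finset.mem_union_left _ h
      · refine Finset.mem_union_right _ ?_
        by_contra hc
        exact h ((hWunion ω ⟨γ, hγ⟩ hm).mpr hc)
    rw [← Finset.card_union_of_disjoint hdisjW, huniv, Finset.card_univ]
  -- choose the good variant
  have hchoice : ∃ P₀ : Finset (BlkT H Δ), (P₀ = wΓ ∨ P₀ = wΓᶜ) ∧ (Wof P₀).card ≠ d + 1 ∧
      ¬(n - d + 1 ≤ (Wof P₀).card ∧ (Wof P₀).card ≤ n - 1) := by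
    by_cases hbad : ((Wof wΓ).card = d + 1 ∨
        (n - d + 1 ≤ (Wof wΓ).card ∧ (Wof wΓ).card ≤ n - 1))
    · exact ⟨wΓᶜ, Or.inr rfl, by omega, by omega⟩
    · exact ⟨wΓ, Or.inl rfl, by omega, by omega⟩
  obtain ⟨P₀, hP₀, hcne, hcint⟩ := hchoice
  set W : Finset Ω := Wof P₀ with hW
  set c : ℕ := W.card with hc
  have hWtrace : ∀ γ : BlkT H Δ, W ∩ γ.1 = (if γ ∈ P₀ then A γ else γ.1 \ A γ) := hWinter P₀
  have htrace_card : ∀ γ : BlkT H Δ, (W ∩ γ.1).card = if γ ∈ P₀ then r else d - r := by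
    intro γ
    rw [hWtrace γ]
    split
    · exact hAcard γ
    · rw [Finset.card_sdiff_of_subset (hAsub γ), hAcard γ, hcardblk _ γ.2]
  have htrace_ne : ∀ γ : BlkT H Δ, (W ∩ γ.1).Nonempty ∧ (W ∩ γ.1) ≠ γ.1 := by
    intro γ
    have hcγ := htrace_card γ
    constructor
    · rw [← Finset.card_pos, hcγ]
      split <;> omega
    · intro he
      have : (W ∩ γ.1).card = d := by rw [he]; exact hcardblk _ γ.2
      rw [hcγ] at this
      revert this
      split <;> omega
  -- the five parts of the relation
  set B'p : Set (Finset Ω) :=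
    {z | ∃ γ ∈ MulAction.orbit ↥H Δ, ∃ p, p ∉ γ ∧ z = insert p γ} with hB'p
  set Sp : Set (Finset Ω) :=
    {z | ∃ h : Equiv.Perm Ω, h ∈ H ∧ ∃ x ∈ S, z = (Finset.univ \ h • Δ) ∪ h • lift Δ x} with hSp
  set Tp : Set (Finset Ω) := {z | ∃ t ∈ RL, z = t.biUnion (fun γ => γ.1)} with hTp
  set Gp : Set (Finset Ω) := {z | ∃ a : Equiv.Perm Ω, a ∈ G ∧ z = a • W} with hGp
  set R : Set (Finset Ω) := (MulAction.orbit ↥H Δ : Set (Finset Ω)) ∪ B'p ∪ Sp ∪ Tp ∪ Gp with hRdef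
  -- cards of the parts
  have hcard_B : ∀ z ∈ MulAction.orbit ↥H Δ, Finset.card z = d := hcardblk
  have hcard_B' : ∀ z ∈ B'p, z.card = d + 1 := by
    rintro z ⟨γ, hγ, p, hp, rfl⟩
    rw [Finset.card_insert_of_notMem hp, hcardblk _ hγ]
  have hcard_S : ∀ z ∈ Sp, ∃ k, 1 ≤ k ∧ k ≤ d - 1 ∧ z.card = n - d + k := by
    rintro z ⟨h, hh, x, hx, rfl⟩
    refine ⟨x.card, ?_, ?_, ?_⟩
    · rw [Nat.one_le_iff_ne_zero]
      simp only [ne_eq, Finset.card_eq_zero]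
      exact hx.2.1
    · have : x.card < Fintype.card {y // y ∈ Δ} :=
        Finset.card_lt_card (Finset.ssubset_univ_iff.mpr hx.2.2)
      rw [Fintype.card_coe] at this
      omega
    · have hsub : h • lift Δ x ⊆ h • Δ := Finset.smul_finset_subset_smul_finset_iff.mpr (lift_subset Δ x)
      have hdisj' : Disjoint (Finset.univ \ h • Δ) (h • lift Δ x) := by
        rw [Finset.disjoint_left]
        intro ω hω1 hω2
        exact (Finset.mem_sdiff.mp hω1).2 (hsub hω2)
      rw [Finset.card_union_of_disjoint hdisj', Finset.card_sdiff_of_subset (Finset.subset_univ _),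
        Finset.card_univ, Finset.card_smul_finset, Finset.card_smul_finset, lift_card, hd]
  have hcard_T : ∀ z ∈ Tp, ∃ k, z.card = k * d := by
    rintro z ⟨t, ht, rfl⟩
    refine ⟨t.card, ?_⟩
    rw [Finset.card_biUnion (fun x _ y _ hxy => hdisj _ x.2 _ y.2 (fun h => hxy (Subtype.ext h))),
      Finset.sum_congr rfl (fun γ _ => hcardblk _ γ.2), Finset.sum_const, smul_eq_mul]
  have hcard_G : ∀ z ∈ Gp, z.card = c := by
    rintro z ⟨a, ha, rfl⟩
    rw [Finset.card_smul_finset]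
  -- "union of blocks" predicate
  set BU : Finset Ω → Prop := fun z => ∀ γ ∈ MulAction.orbit ↥H Δ, γ ⊆ z ∨ Disjoint γ z
    with hBUdef
  have hBU_B : ∀ z ∈ MulAction.orbit ↥H Δ, BU z := by
    rintro z hz γ hγ
    by_cases he : γ = z
    · exact Or.inl (he ▸ subset_rfl)
    · exact Or.inr (hdisj _ hγ _ hz he)
  have hBU_T : ∀ t : Finset (BlkT H Δ), BU (t.biUnion (fun γ => γ.1)) := by
    intro t γ hγ
    by_cases he : (⟨γ, hγ⟩ : BlkT H Δ) ∈ t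
    · exact Or.inl (fun ω hω => Finset.mem_biUnion.mpr ⟨⟨γ, hγ⟩, he, hω⟩)
    · refine Or.inr (Finset.disjoint_left.mpr ?_)
      intro ω hω hω'
      obtain ⟨γ', hγ', hm⟩ := Finset.mem_biUnion.mp hω'
      have : γ = γ'.1 := by
        by_contra hne
        exact Finset.disjoint_left.mp (hdisj _ hγ _ γ'.2 hne) hω hm
      apply he
      have : (⟨γ, hγ⟩ : BlkT H Δ) = γ' := Subtype.ext this
      rwa [this]
  have hnotBU_S : ∀ z ∈ Sp, ¬ BU z := by
    rintro z ⟨h, hh, x, hx, rfl⟩ hbu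
    have hγm : h • Δ ∈ MulAction.orbit ↥H Δ := hHblk h hh Δ hΔmem
    have hsub : h • lift Δ x ⊆ h • Δ :=
      Finset.smul_finset_subset_smul_finset_iff.mpr (lift_subset Δ x)
    have hint : (h • Δ) ∩ ((Finset.univ \ h • Δ) ∪ h • lift Δ x) = h • lift Δ x := by
      ext ω
      simp only [Finset.mem_inter, Finset.mem_union, Finset.mem_sdiff, Finset.mem_univ,
        true_and]
      constructor
      · rintro ⟨h1', h2' | h2'⟩
        · exact absurd h1' h2'
        · exact h2'
      · intro hω
        exact ⟨hsub hω, Or.inr hω⟩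
    rcases hbu _ hγm with hsub' | hdisj'
    · have : (h • Δ) ∩ ((Finset.univ \ h • Δ) ∪ h • lift Δ x) = h • Δ :=
        Finset.inter_eq_left.mpr hsub'
      rw [hint] at this
      have hcard : (h • Δ).card = x.card := by
        rw [← this, Finset.card_smul_finset, lift_card]
      rw [Finset.card_smul_finset] at hcard
      have hxlt : x.card < Fintype.card {y // y ∈ Δ} :=
        Finset.card_lt_card (Finset.ssubset_univ_iff.mpr hx.2.2)
      rw [Fintype.card_coe] at hxlt
      omega
    · obtain ⟨δ, hδ⟩ := Finset.nonempty_iff_ne_empty.mpr hx.2.1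
      have hω1 : h • (δ : Ω) ∈ h • lift Δ x :=
        Finset.smul_mem_smul_finset (Finset.mem_image_of_mem _ hδ)
      have hω2 : h • (δ : Ω) ∈ h • Δ := Finset.smul_mem_smul_finset δ.2
      exact Finset.disjoint_left.mp hdisj' hω2 (Finset.mem_union_right _ hω1)
  have hBU_smul : ∀ p : Equiv.Perm Ω, (∀ γ ∈ MulAction.orbit ↥H Δ, p⁻¹ • γ ∈ MulAction.orbit ↥H Δ) →
      ∀ z, BU z → BU (p • z) := by
    intro p hp z hz γ hγ
    rcases hz _ (hp γ hγ) with hsub | hdis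
    · left
      intro ω hω
      have : p⁻¹ • ω ∈ p⁻¹ • γ := Finset.smul_mem_smul_finset hω
      have h2' := hsub this
      rwa [Finset.inv_smul_mem_iff] at h2'
    · right
      rw [Finset.disjoint_left]
      intro ω hω hω'
      rw [← Finset.inv_smul_mem_iff] at hω'
      exact Finset.disjoint_left.mp hdis (Finset.smul_mem_smul_finset hω) hω'
  have hnotBU_W : ¬ BU W := by
    intro hbu
    have hne := htrace_ne ⟨Δ, hΔmem⟩
    rcases hbu Δ hΔmem with hsub | hdis
    · exact hne.2 (Finset.inter_eq_right.mpr hsub)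
    · obtain ⟨ω, hω⟩ := hne.1
      have := Finset.mem_inter.mp hω
      exact Finset.disjoint_left.mp hdis this.2 this.1
  have hnotBU_G : ∀ z ∈ Gp, ¬ BU z := by
    rintro z ⟨a, ha, rfl⟩ hbu
    apply hnotBU_W
    have := hBU_smul a⁻¹ (fun γ hγ => by
      rw [inv_inv]
      exact hHblk a (hG ha) γ hγ) _ hbu
    rwa [inv_smul_smul] at this
  -- lifting permutations of blocks through biUnion
  have hLB : ∀ (p : Equiv.Perm Ω) (pb : Equiv.Perm (BlkT H Δ)),
      (∀ γ : BlkT H Δ, (pb γ).1 = p • γ.1) → ∀ t : Finset (BlkT H Δ),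
      p • (t.biUnion (fun γ => γ.1)) = (pb • t).biUnion (fun γ => γ.1) := by
    intro p pb hpb t
    ext ω
    rw [← Finset.inv_smul_mem_iff, Finset.mem_biUnion, Finset.mem_biUnion]
    constructor
    · rintro ⟨γ, hγ, hm⟩
      refine ⟨pb γ, Finset.smul_mem_smul_finset hγ, ?_⟩
      rw [hpb γ, ← Finset.inv_smul_mem_iff]
      exact hm
    · rintro ⟨γ', hγ', hm⟩
      obtain ⟨γ, hγ, rfl⟩ := Finset.mem_smul_finset.mp hγ'
      refine ⟨γ, hγ, ?_⟩
      have : (pb • γ : BlkT H Δ) = pb γ := rfl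
      rw [this, hpb γ, ← Finset.inv_smul_mem_iff] at hm
      exact hm
  have habar : ∀ a : Equiv.Perm Ω, a ∈ H → ∃ pb : Equiv.Perm (BlkT H Δ),
      pb ∈ invGroup RL ∧ ∀ γ : BlkT H Δ, (pb γ).1 = a • γ.1 := by
    intro a ha
    refine ⟨MulAction.toPermHom ↥H (BlkT H Δ) ⟨a, ha⟩, ?_, fun γ => rfl⟩
    rw [hLrange]
    exact ⟨⟨a, ha⟩, rfl⟩
  -- Part I : G ≤ invGroup R
  have hGsub : ∀ a : Equiv.Perm Ω, a ∈ G → a ∈ invGroup R := by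
    intro a haG
    have haH : a ∈ H := hG haG
    rw [mem_invGroup]
    intro z hz
    rw [hRdef] at hz ⊢
    rcases hz with ((((hz | hz) | hz) | hz) | hz)
    · exact Or.inl (Or.inl (Or.inl (Or.inl (hHblk a haH z hz))))
    · obtain ⟨γ, hγ, p, hp, rfl⟩ := hz
      refine Or.inl (Or.inl (Or.inl (Or.inr ⟨a • γ, hHblk a haH γ hγ, a • p, ?_, ?_⟩)))
      · rw [Finset.smul_mem_smul_finset_iff]
        exact hp
      · rw [Finset.smul_finset_insert]
    · obtain ⟨h, hh, x, hx, rfl⟩ := hz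
      refine Or.inl (Or.inl (Or.inr ⟨a * h, H.mul_mem haH hh, x, hx, ?_⟩))
      rw [Finset.smul_finset_union, Finset.smul_finset_sdiff, Finset.smul_finset_univ,
        mul_smul, mul_smul]
    · obtain ⟨t, ht, rfl⟩ := hz
      obtain ⟨pb, hpbL, hpb⟩ := habar a haH
      refine Or.inl (Or.inr ⟨pb • t, ?_, ?_⟩)
      · exact hpbL t ht
      · exact hLB a pb hpb t
    · obtain ⟨b, hb, rfl⟩ := hz
      exact Or.inr ⟨a * b, G.mul_mem haG hb, (mul_smul a b W).symm⟩
  -- every member of R of size d+1 is a block plus an external point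
  have hclaimA : ∀ z ∈ R, z.card = d + 1 →
      ∃ γ ∈ MulAction.orbit ↥H Δ, ∃ p, p ∉ γ ∧ z = insert p γ := by
    intro z hz hcard
    rw [hRdef] at hz
    rcases hz with ((((hz | hz) | hz) | hz) | hz)
    · have := hcard_B z hz
      omega
    · exact hz
    · obtain ⟨k, hk1, hk2, hk3⟩ := hcard_S z hz
      have hn2d : n = 2 * d ∧ k = 1 := by omega
      obtain ⟨h, hh, x, hx, rfl⟩ := hz
      have hγm : h • Δ ∈ MulAction.orbit ↥H Δ := hHblk h hh Δ hΔmem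
      obtain ⟨γ', hγ', hne⟩ := hexne _ hγm
      have hdisj' := hdisj _ hγ' _ hγm hne
      have hsub' : γ' ⊆ Finset.univ \ h • Δ := by
        intro ω hω
        rw [Finset.mem_sdiff]
        exact ⟨Finset.mem_univ _, Finset.disjoint_left.mp hdisj' hω⟩
      have hγeq : Finset.univ \ h • Δ = γ' := by
        refine (Finset.eq_of_subset_of_card_le hsub' ?_).symm
        rw [Finset.card_sdiff_of_subset (Finset.subset_univ _), Finset.card_univ,
          Finset.card_smul_finset, hcardblk _ hγ', ← hd, ← hn]
        omega
      have hx1 : (h • lift Δ x).card = 1 := by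
        rw [Finset.card_smul_finset, lift_card]
        have : x.card = k := by
          have h5 := hk3
          have h6 : ((Finset.univ \ h • Δ) ∪ h • lift Δ x).card = n - d + x.card := by
            have hsub2 : h • lift Δ x ⊆ h • Δ :=
              Finset.smul_finset_subset_smul_finset_iff.mpr (lift_subset Δ x)
            have hdisj2 : Disjoint (Finset.univ \ h • Δ) (h • lift Δ x) := by
              rw [Finset.disjoint_left]
              intro ω hω1 hω2
              exact (Finset.mem_sdiff.mp hω1).2 (hsub2 hω2)
            rw [Finset.card_union_of_disjoint hdisj2, Finset.card_sdiff_of_subset (Finset.subset_univ _),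
              Finset.card_univ, Finset.card_smul_finset, Finset.card_smul_finset, lift_card, hd]
          omega
        omega
      obtain ⟨p, hp⟩ := Finset.card_eq_one.mp hx1
      have hpmem : p ∈ h • Δ := by
        have hsub2 : h • lift Δ x ⊆ h • Δ :=
          Finset.smul_finset_subset_smul_finset_iff.mpr (lift_subset Δ x)
        exact hsub2 (hp ▸ Finset.mem_singleton_self p)
      refine ⟨γ', hγ', p, Finset.disjoint_left.mp hdisj'.symm hpmem |> fun h' => ?_, ?_⟩
      · exact fun hmem => (Finset.disjoint_right.mp hdisj' hpmem) hmem
      · rw [hγeq, hp, Finset.insert_eq, Finset.union_comm]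
    · obtain ⟨k, hk⟩ := hcard_T z hz
      exfalso
      rcases Nat.lt_or_ge k 2 with hklt | hkge
      · interval_cases k <;> omega
      · have : 2 * d ≤ k * d := Nat.mul_le_mul_right d hkge
        omega
    · have := hcard_G z hz
      omega
  -- any element of the invariance group permutes the blocks
  have hgBlk : ∀ g : Equiv.Perm Ω, g ∈ invGroup R →
      ∀ γ ∈ MulAction.orbit ↥H Δ, g • γ ∈ MulAction.orbit ↥H Δ := by
    intro g hg γ hγ
    have hout : 1 < (Finset.univ \ γ).card := by
      rw [Finset.card_sdiff_of_subset (Finset.subset_univ _), Finset.card_univ, hcardblk _ hγ, ← hn]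
      omega
    obtain ⟨p₁, hp₁, p₂, hp₂, hpne⟩ := Finset.one_lt_card.mp hout
    rw [Finset.mem_sdiff] at hp₁ hp₂
    have hz₁ : insert p₁ γ ∈ R := by
      rw [hRdef]
      exact Or.inl (Or.inl (Or.inl (Or.inr ⟨γ, hγ, p₁, hp₁.2, rfl⟩)))
    have hz₂ : insert p₂ γ ∈ R := by
      rw [hRdef]
      exact Or.inl (Or.inl (Or.inl (Or.inr ⟨γ, hγ, p₂, hp₂.2, rfl⟩)))
    have hc₁ : (g • insert p₁ γ).card = d + 1 := by
      rw [Finset.card_smul_finset, Finset.card_insert_of_notMem hp₁.2, hcardblk _ hγ]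
    have hc₂ : (g • insert p₂ γ).card = d + 1 := by
      rw [Finset.card_smul_finset, Finset.card_insert_of_notMem hp₂.2, hcardblk _ hγ]
    obtain ⟨γ₁, hγ₁, q₁, hq₁, he₁⟩ := hclaimA _ (hg _ hz₁) hc₁
    obtain ⟨γ₂, hγ₂, q₂, hq₂, he₂⟩ := hclaimA _ (hg _ hz₂) hc₂
    have hinter : insert p₁ γ ∩ insert p₂ γ = γ := by
      ext ω
      simp only [Finset.mem_inter, Finset.mem_insert]
      constructor
      · rintro ⟨h1' | h1', h2' | h2'⟩
        · exact absurd (h1' ▸ h2') hpne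
        · exact h2'
        · exact h1'
        · exact h1'
      · intro h'
        exact ⟨Or.inr h', Or.inr h'⟩
    have hgγ : g • γ = (insert q₁ γ₁) ∩ (insert q₂ γ₂) := by
      rw [← he₁, ← he₂, ← Finset.smul_finset_inter, hinter]
    by_cases hcase : γ₁ = γ₂
    · subst hcase
      have hqne : q₁ ≠ q₂ := by
        intro he
        subst he
        rw [← he₂] at he₁
        have : insert p₁ γ = insert p₂ γ := by
          have := congrArg (fun s => g⁻¹ • s) he₁
          simpa using this
        apply hpne
        have hmem : p₁ ∈ insert p₂ γ := this ▸ Finset.mem_insert_self p₁ γ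
        rcases Finset.mem_insert.mp hmem with h' | h'
        · exact h'
        · exact absurd h' hp₁.2
      have : (insert q₁ γ₁) ∩ (insert q₂ γ₁) = γ₁ := by
        ext ω
        simp only [Finset.mem_inter, Finset.mem_insert]
        constructor
        · rintro ⟨h1' | h1', h2' | h2'⟩
          · exact absurd (h1' ▸ h2') hqne
          · exact h2'
          · exact h1'
          · exact h1'
        · intro h'
          exact ⟨Or.inr h', Or.inr h'⟩
      rw [hgγ, this]
      exact hγ₁
    · exfalso
      have hdisj12 := hdisj _ hγ₁ _ hγ₂ hcase
      have hsub2 : (insert q₁ γ₁) ∩ (insert q₂ γ₂) ⊆ {q₁, q₂} := by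
        intro ω hω
        rw [Finset.mem_inter, Finset.mem_insert, Finset.mem_insert] at hω
        rcases hω with ⟨h1' | h1', h2' | h2'⟩
        · exact Finset.mem_insert.mpr (Or.inl h1')
        · exact Finset.mem_insert.mpr (Or.inl h1')
        · rw [Finset.mem_insert, Finset.mem_singleton]
          exact Or.inr h2'
        · exact absurd h2' (Finset.disjoint_left.mp hdisj12 h1')
      have hcard2 : ((insert q₁ γ₁) ∩ (insert q₂ γ₂)).card ≤ 2 := by
        calc ((insert q₁ γ₁) ∩ (insert q₂ γ₂)).card ≤ ({q₁, q₂} : Finset Ω).card :=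
              Finset.card_le_card hsub2
        _ ≤ 2 := Finset.card_insert_le _ _ |>.trans (by simp)
      rw [← hgγ, Finset.card_smul_finset, hcardblk _ hγ] at hcard2
      omega
  -- no insert-shape is a union of blocks
  have hnotBU_B' : ∀ z ∈ B'p, ¬ BU z := by
    rintro z ⟨γ, hγ, p, hp, rfl⟩ hbu
    obtain ⟨γp, hγp, hpm⟩ := hcover p
    rcases hbu _ hγp with hsub | hdis
    · have hcd : 1 < γp.card := by rw [hcardblk _ hγp]; omega
      obtain ⟨q, hq, hqp⟩ := Finset.exists_mem_ne hcd p
      have hqγ : q ∈ γ := by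
        rcases Finset.mem_insert.mp (hsub hq) with h' | h'
        · exact absurd h' hqp
        · exact h'
      have : γp = γ := by
        by_contra hne
        exact Finset.disjoint_left.mp (hdisj _ hγp _ hγ hne) hq hqγ
      exact hp (this ▸ hpm)
    · exact Finset.disjoint_left.mp hdis hpm (Finset.mem_insert_self p γ)
  -- biUnion of blocks determines the block set
  have hTinj : ∀ t t' : Finset (BlkT H Δ),
      t.biUnion (fun γ => γ.1) = t'.biUnion (fun γ => γ.1) → t = t' := by
    have key : ∀ t t' : Finset (BlkT H Δ),
        t.biUnion (fun γ => γ.1) = t'.biUnion (fun γ => γ.1) → ∀ γ ∈ t, γ ∈ t' := by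
      intro t t' he γ hγ
      have hne : γ.1.Nonempty := by
        rw [← Finset.card_pos, hcardblk _ γ.2]
        omega
      obtain ⟨ω, hω⟩ := hne
      have hω' : ω ∈ t'.biUnion (fun γ => γ.1) := by
        rw [← he]
        exact Finset.mem_biUnion.mpr ⟨γ, hγ, hω⟩
      obtain ⟨γ', hγ', hm⟩ := Finset.mem_biUnion.mp hω'
      have : γ = γ' := by
        by_contra hne'
        exact Finset.disjoint_left.mp
          (hdisj _ γ.2 _ γ'.2 (fun h => hne' (Subtype.ext h))) hω hm
      rwa [this]
    intro t t' he
    ext γ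
    exact ⟨key t t' he γ, key t' t he.symm γ⟩
  -- all singletons are in RL if one is
  have hsingRL : (∃ γ0 : BlkT H Δ, ({γ0} : Finset (BlkT H Δ)) ∈ RL) →
      ∀ γ : BlkT H Δ, ({γ} : Finset (BlkT H Δ)) ∈ RL := by
    rintro ⟨γ0, hγ0⟩ γ
    have hmem : ((rep γ : Equiv.Perm Ω) * (rep γ0 : Equiv.Perm Ω)⁻¹) ∈ H :=
      H.mul_mem (rep γ).2 (H.inv_mem (rep γ0).2)
    obtain ⟨pb', hpb'L, hpb'⟩ := habar _ hmem
    have h0 := hpb'L _ hγ0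
    rw [Finset.smul_finset_singleton] at h0
    have hval : (pb' γ0).1 = γ.1 := by
      rw [hpb' γ0, mul_smul]
      have h1' : (rep γ0 : Equiv.Perm Ω) • Δ = γ0.1 := hrep γ0
      have h2' : (rep γ0 : Equiv.Perm Ω)⁻¹ • γ0.1 = Δ := by
        rw [← h1', inv_smul_smul]
      rw [h2']
      exact hrep γ
    have : pb' • γ0 = γ := Subtype.ext hval
    rwa [this] at h0
  -- the heart: a permutation preserving R and fixing W is the identity
  have hreg : ∀ g' : Equiv.Perm Ω, g' ∈ invGroup R → g' • W = W → g' = 1 := by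
    intro g' hg' hWfix
    have hgB := hgBlk g' hg'
    have hgB' := hgBlk g'⁻¹ ((invGroup R).inv_mem hg')
    set pb : Equiv.Perm (BlkT H Δ) :=
      { toFun := fun γ => ⟨g' • γ.1, hgB _ γ.2⟩
        invFun := fun γ => ⟨g'⁻¹ • γ.1, hgB' _ γ.2⟩
        left_inv := fun γ => Subtype.ext (inv_smul_smul g' γ.1)
        right_inv := fun γ => Subtype.ext (smul_inv_smul g' γ.1) } with hpbdef
    have hpbval : ∀ γ : BlkT H Δ, (pb γ).1 = g' • γ.1 := fun γ => rfl
    -- pb preserves RL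
    have hpbL : pb ∈ invGroup RL := by
      intro t ht
      have htT : t.biUnion (fun γ => γ.1) ∈ R := by
        rw [hRdef]
        exact Or.inl (Or.inr ⟨t, ht, rfl⟩)
      have hgt := hg' _ htT
      rw [hLB g' pb hpbval t] at hgt
      have hBUt : BU ((pb • t).biUnion (fun γ => γ.1)) := hBU_T _
      rw [hRdef] at hgt
      rcases hgt with ((((hgt | hgt) | hgt) | hgt) | hgt)
      · -- a single block : t was a singleton
        have hsing : pb • t = {(⟨_, hgt⟩ : BlkT H Δ)} := by
          apply hTinj
          rw [Finset.singleton_biUnion]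
        have ht' : t = {pb⁻¹ (⟨_, hgt⟩ : BlkT H Δ)} := by
          have := congrArg (fun s => pb⁻¹ • s) hsing
          simpa using this
        have hsingmem : ∃ γ0 : BlkT H Δ, ({γ0} : Finset (BlkT H Δ)) ∈ RL :=
          ⟨_, ht' ▸ ht⟩
        rw [hsing]
        exact hsingRL hsingmem _
      · exact absurd hBUt (hnotBU_B' _ hgt)
      · exact absurd hBUt (hnotBU_S _ hgt)
      · obtain ⟨t', ht', he⟩ := hgt
        have : pb • t = t' := hTinj _ _ he
        rwa [this]
      · exact absurd hBUt (hnotBU_G _ hgt)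
    -- pb fixes the trace pattern, hence equals 1 by regularity of wΓ
    have htr : ∀ γ : BlkT H Δ, (W ∩ (pb γ).1).card = (W ∩ γ.1).card := by
      intro γ
      have hWg : W ∩ g' • γ.1 = g' • (W ∩ γ.1) := by
        rw [Finset.smul_finset_inter, hWfix]
      rw [hpbval γ, hWg, Finset.card_smul_finset]
    have hrdr : ¬ (d - r = r) := by omega
    have hpbP₀ : pb • P₀ = P₀ := by
      apply Finset.eq_of_subset_of_card_le
      · intro x hx
        obtain ⟨γ, hγ, rfl⟩ := Finset.mem_smul_finset.mp hx
        have h1' := htr γ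
        rw [htrace_card γ, if_pos hγ] at h1'
        have h2' := htrace_card (pb • γ)
        have hpbsmul : (pb • γ : BlkT H Δ) = pb γ := rfl
        rw [hpbsmul] at h2' ⊢
        by_contra hne
        rw [if_neg hne] at h2'
        rw [h2'] at h1'
        exact hrdr h1'
      · rw [Finset.card_smul_finset]
    have hpbwΓ : pb • wΓ = wΓ := by
      rcases hP₀ with h' | h'
      · rwa [h'] at hpbP₀
      · rw [h'] at hpbP₀
        have hcompl : pb • wΓᶜ = (pb • wΓ)ᶜ := by
          rw [Finset.compl_eq_univ_sdiff, Finset.compl_eq_univ_sdiff,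
            Finset.smul_finset_sdiff, Finset.smul_finset_univ]
        rw [hcompl] at hpbP₀
        have := congrArg compl hpbP₀
        rwa [compl_compl, compl_compl] at this
    have hpb1 : pb = 1 := hwΓreg pb hpbL hpbwΓ
    have hfixblk : ∀ γ : BlkT H Δ, g' • γ.1 = γ.1 := by
      intro γ
      have : pb γ = γ := by rw [hpb1]; rfl
      have := congrArg Subtype.val this
      rwa [hpbval γ] at this
    -- per-block analysis
    have hfixpt : ∀ γ : BlkT H Δ, ∀ ω ∈ γ.1, g' ω = ω := by
      intro γ
      have hγΔ : (rep γ : Equiv.Perm Ω) • Δ = γ.1 := hrep γ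
      set hγp : Equiv.Perm Ω := (rep γ : Equiv.Perm Ω) with hγpdef
      set τ : Equiv.Perm Ω := hγp⁻¹ * g' * hγp with hτdef
      have hτΔ : τ • Δ = Δ := by
        rw [hτdef, mul_smul, mul_smul, hγΔ, hfixblk γ, ← hγΔ, inv_smul_smul]
      have hτmem : τ ∈ MulAction.stabilizer (Equiv.Perm Ω) Δ := hτΔ
      set σ : Equiv.Perm {x // x ∈ Δ} := restrictHom Δ ⟨τ, hτmem⟩ with hσdef
      -- helper computations
      have hinterU : ∀ v : Finset Ω, v ⊆ γ.1 →
          ((Finset.univ \ γ.1) ∪ v) ∩ γ.1 = v := by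
        intro v hv
        rw [Finset.union_inter_distrib_right, Finset.inter_eq_left.mpr hv]
        have : (Finset.univ \ γ.1) ∩ γ.1 = ∅ := by
          ext ω
          simp only [Finset.mem_inter, Finset.mem_sdiff, Finset.mem_univ, true_and,
            Finset.notMem_empty, iff_false, not_and]
          exact fun h' => fun h2 => h' h2
        rw [this, Finset.empty_union]
      have hcomplU : ∀ v : Finset Ω, Finset.univ \ ((Finset.univ \ γ.1) ∪ v) = γ.1 \ v := by
        intro v
        ext ω
        simp only [Finset.mem_sdiff, Finset.mem_union, Finset.mem_univ, true_and]
        constructor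
        · intro h'
          push_neg at h'
          exact ⟨h'.1, h'.2⟩
        · intro h'
          push_neg
          exact ⟨h'.1, h'.2⟩
      -- key move: g' transfers S-translates on γ to S-translates on γ
      have hxmove : ∀ x ∈ S, ∃ h' : Equiv.Perm Ω, h' ∈ H ∧ h' • Δ = γ.1 ∧
          ∃ x' ∈ S, g' • (hγp • lift Δ x) = h' • lift Δ x' := by
        intro x hx
        have hymem : (Finset.univ \ hγp • Δ) ∪ hγp • lift Δ x ∈ R := by
          rw [hRdef]
          exact Or.inl (Or.inl (Or.inr ⟨hγp, (rep γ).2, x, hx, rfl⟩))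
        have hgy := hg' _ hymem
        have hgyeq : g' • ((Finset.univ \ hγp • Δ) ∪ hγp • lift Δ x)
            = (Finset.univ \ γ.1) ∪ g' • (hγp • lift Δ x) := by
          rw [Finset.smul_finset_union, Finset.smul_finset_sdiff, Finset.smul_finset_univ,
            hγΔ, hfixblk γ]
        rw [hgyeq] at hgy
        set w₁ : Finset Ω := g' • (hγp • lift Δ x) with hw₁
        have hw₁sub : w₁ ⊆ γ.1 := by
          rw [hw₁]
          have h1' : hγp • lift Δ x ⊆ hγp • Δ :=
            Finset.smul_finset_subset_smul_finset_iff.mpr (lift_subset Δ x)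
          have h2' : g' • (hγp • lift Δ x) ⊆ g' • (hγp • Δ) :=
            Finset.smul_finset_subset_smul_finset_iff.mpr h1'
          rwa [hγΔ, hfixblk γ] at h2'
        have hw₁card : w₁.card = x.card := by
          rw [hw₁, Finset.card_smul_finset, Finset.card_smul_finset, lift_card]
        obtain ⟨hxc1, hxc2⟩ := hxbounds x hx
        have hzcard : ((Finset.univ \ γ.1) ∪ w₁).card = n - d + x.card := by
          have hdisj2 : Disjoint (Finset.univ \ γ.1) w₁ := by
            rw [Finset.disjoint_left]
            intro ω hω1 hω2
            exact (Finset.mem_sdiff.mp hω1).2 (hw₁sub hω2)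
          rw [Finset.card_union_of_disjoint hdisj2, Finset.card_sdiff_of_subset (Finset.subset_univ _),
            Finset.card_univ, hcardblk _ γ.2, hw₁card, ← hn]
        by_cases hcase : n - d + x.card = d + 1
        · -- small case: w₁ is a singleton, use that all singletons lie in S
          have hx1 : x.card = 1 := by omega
          have hw₁1 : w₁.card = 1 := by rw [hw₁card, hx1]
          obtain ⟨q, hq⟩ := Finset.card_eq_one.mp hw₁1
          have hqγ : q ∈ γ.1 := hw₁sub (hq ▸ Finset.mem_singleton_self q)
          have hqΔ : hγp⁻¹ • q ∈ Δ := by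
            rw [Finset.inv_smul_mem_iff, hγΔ]
            exact hqγ
          refine ⟨hγp, (rep γ).2, hγΔ, {⟨hγp⁻¹ • q, hqΔ⟩}, hsingS ⟨x, hx, hx1⟩ _, ?_⟩
          rw [hq, lift_singleton, Finset.smul_finset_singleton]
          congr 1
          exact (smul_inv_smul hγp q).symm
        · -- generic case: the image must be another S-translate on γ
          rw [hRdef] at hgy
          rcases hgy with ((((hgy | hgy) | hgy) | hgy) | hgy)
          · have := hcard_B _ hgy
            rw [hzcard] at this
            omega
          · have := hcard_B' _ hgy
            rw [hzcard] at this
            exact absurd this hcase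
          · -- the S-case : identify the block and the translate
            obtain ⟨h', hh', x', hx', heq⟩ := hgy
            have hh'blk : h' • Δ ∈ MulAction.orbit ↥H Δ := hHblk h' hh' Δ hΔmem
            have hDne : (γ.1 \ w₁).Nonempty := by
              rw [← Finset.card_pos, Finset.card_sdiff_of_subset hw₁sub, hcardblk _ γ.2, hw₁card]
              omega
            obtain ⟨ω, hω⟩ := hDne
            have hωD : ω ∈ (h' • Δ) \ (h' • lift Δ x') := by
              have e1 := hcomplU w₁
              have e2 : Finset.univ \ ((Finset.univ \ h' • Δ) ∪ h' • lift Δ x')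
                  = (h' • Δ) \ (h' • lift Δ x') := by
                ext ω'
                simp only [Finset.mem_sdiff, Finset.mem_union, Finset.mem_univ, true_and]
                constructor
                · intro h''
                  push_neg at h''
                  exact ⟨h''.1, h''.2⟩
                · intro h''
                  push_neg
                  exact ⟨h''.1, h''.2⟩
              rw [← e2, ← heq, e1]
              exact hω
            have hblkeq : h' • Δ = γ.1 := by
              by_contra hne
              exact Finset.disjoint_left.mp (hdisj _ hh'blk _ γ.2 hne)
                (Finset.mem_sdiff.mp hωD).1 (Finset.mem_sdiff.mp hω).1
            refine ⟨h', hh', hblkeq, x', hx', ?_⟩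
            have hsub' : h' • lift Δ x' ⊆ γ.1 := by
              rw [← hblkeq]
              exact Finset.smul_finset_subset_smul_finset_iff.mpr (lift_subset Δ x')
            have e3 : ((Finset.univ \ γ.1) ∪ w₁) ∩ γ.1 = w₁ := hinterU w₁ hw₁sub
            have e4 : ((Finset.univ \ h' • Δ) ∪ h' • lift Δ x') ∩ γ.1 = h' • lift Δ x' := by
              rw [hblkeq]
              exact hinterU _ hsub'
            rw [← e3, heq, e4]
          · -- union of blocks : contradicts the proper trace on γ
            obtain ⟨t, ht, he⟩ := hgy
            exfalso
            have hbu : BU ((Finset.univ \ γ.1) ∪ w₁) := by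
              rw [he]
              exact hBU_T t
            have hw₁ne : w₁.Nonempty := by
              rw [← Finset.card_pos, hw₁card]
              omega
            rcases hbu _ γ.2 with hsub' | hdis'
            · have hγw : γ.1 = w₁ :=
                (Finset.inter_eq_right.mpr hsub').symm.trans (hinterU w₁ hw₁sub)
              have hcc := congrArg Finset.card hγw
              rw [hcardblk _ γ.2, hw₁card] at hcc
              omega
            · obtain ⟨ω, hω⟩ := hw₁ne
              exact Finset.disjoint_left.mp hdis' (hw₁sub hω)
                (Finset.mem_union_right _ hω)
          · have hcc := hcard_G _ hgy
            rw [hzcard] at hcc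
            exact absurd (⟨by omega, by omega⟩ : n - d + 1 ≤ c ∧ c ≤ n - 1) hcint
      -- σ preserves RK
      have hσK : σ ∈ invGroup RK := by
        intro x hxRK
        by_cases hxe : x = ∅
        · subst hxe
          rw [Finset.smul_finset_empty]
          exact hxRK
        by_cases hxu : x = Finset.univ
        · subst hxu
          rw [Finset.smul_finset_univ]
          exact hxRK
        have hxS : x ∈ S := ⟨hxRK, hxe, hxu⟩
        obtain ⟨h', hh', hh'Δ, x', hx', heq⟩ := hxmove x hxS
        have ht1 : τ • lift Δ x = (hγp⁻¹ * h') • lift Δ x' := by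
          rw [hτdef, mul_smul, mul_smul, mul_smul, heq]
        set u : Equiv.Perm Ω := hγp⁻¹ * h' with hu
        have huH : u ∈ H := H.mul_mem (H.inv_mem (rep γ).2) hh'
        have huΔ : u • Δ = Δ := by
          rw [hu, mul_smul, hh'Δ, ← hγΔ, inv_smul_smul]
        have huΔ' : u ∈ MulAction.stabilizer (Equiv.Perm Ω) Δ := huΔ
        have huK : restrictHom Δ ⟨u, huΔ'⟩ ∈ inducedGroup H Δ :=
          Subgroup.mem_map.mpr ⟨⟨u, huΔ'⟩, Subgroup.mem_subgroupOf.mpr ⟨huH, huΔ'⟩, rfl⟩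
        have huinv : restrictHom Δ ⟨u, huΔ'⟩ ∈ invGroup RK := by
          rw [← hRK]
          exact huK
        have hux' : (restrictHom Δ ⟨u, huΔ'⟩) • x' ∈ S := hKS _ huinv _ hx'
        have hlift : lift Δ (σ • x) = lift Δ ((restrictHom Δ ⟨u, huΔ'⟩) • x') := by
          rw [hσdef, ← restrictHom_lift, ← restrictHom_lift]
          exact ht1
        have hσx : σ • x = (restrictHom Δ ⟨u, huΔ'⟩) • x' := lift_inj Δ hlift
        rw [hσx]
        exact hux'.1
      have hσmem : σ ∈ inducedGroup H Δ := by
        rw [hRK]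
        exact hσK
      -- σ fixes wΔ
      have hfixtr : g' • (W ∩ γ.1) = W ∩ γ.1 := by
        rw [Finset.smul_finset_inter, hWfix, hfixblk γ]
      have hAeq : A γ = hγp • lift Δ wΔ := rfl
      have hσw : σ • wΔ = wΔ := by
        have htr := hWtrace γ
        rw [hσdef]
        by_cases hγP : γ ∈ P₀
        · rw [if_pos hγP, hAeq] at htr
          have hτw : τ • lift Δ wΔ = lift Δ wΔ := by
            rw [hτdef, mul_smul, mul_smul]
            rw [show g' • (hγp • lift Δ wΔ) = hγp • lift Δ wΔ from by
              rw [← htr]; exact hfixtr]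
            rw [inv_smul_smul]
          have h5 := restrictHom_lift Δ ⟨τ, hτmem⟩ wΔ
          rw [hτw] at h5
          exact (lift_inj Δ h5).symm
        · rw [if_neg hγP, hAeq] at htr
          have hcompl2 : γ.1 \ hγp • lift Δ wΔ = hγp • lift Δ (Finset.univ \ wΔ) := by
            rw [lift_sdiff, lift_univ, Finset.smul_finset_sdiff, hγΔ]
          rw [hcompl2] at htr
          have hτw : τ • lift Δ (Finset.univ \ wΔ) = lift Δ (Finset.univ \ wΔ) := by
            rw [hτdef, mul_smul, mul_smul]
            rw [show g' • (hγp • lift Δ (Finset.univ \ wΔ))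
                = hγp • lift Δ (Finset.univ \ wΔ) from by
              rw [← htr]; exact hfixtr]
            rw [inv_smul_smul]
          have h5 := restrictHom_lift Δ ⟨τ, hτmem⟩ (Finset.univ \ wΔ)
          rw [hτw] at h5
          have h6 := (lift_inj Δ h5).symm
          rw [Finset.smul_finset_sdiff, Finset.smul_finset_univ,
            ← Finset.compl_eq_univ_sdiff, ← Finset.compl_eq_univ_sdiff] at h6
          exact compl_injective h6
      have hσ1 : σ = 1 := hwΔ σ hσmem hσw
      -- conclude pointwise on γ
      intro ω hω
      have hδ : hγp⁻¹ • ω ∈ Δ := by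
        rw [Finset.inv_smul_mem_iff, hγΔ]
        exact hω
      have hτfix : τ (hγp⁻¹ ω) = hγp⁻¹ ω := by
        have h8 : σ ⟨hγp⁻¹ • ω, hδ⟩ = ⟨hγp⁻¹ • ω, hδ⟩ := by
          rw [hσ1]
          rfl
        exact congrArg Subtype.val h8
      have h9 : hγp⁻¹ (g' (hγp (hγp⁻¹ ω))) = hγp⁻¹ ω := hτfix
      rw [show hγp (hγp⁻¹ ω) = ω from Equiv.apply_symm_apply hγp ω] at h9
      exact (Equiv.injective hγp⁻¹) h9
    apply Equiv.ext
    intro ω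
    obtain ⟨γ, hγ, hm⟩ := hcover ω
    have := hfixpt ⟨γ, hγ⟩ ω hm
    simpa using this
  -- conclusion : G is the invariance group of R
  refine ⟨R, le_antisymm ?_ ?_⟩
  · intro a ha
    exact hGsub a ha
  · intro g hg
    have hWR : W ∈ R := by
      rw [hRdef]
      exact Or.inr ⟨1, G.one_mem, (one_smul _ W).symm⟩
    have hgW := hg _ hWR
    have hnotBUgW : ¬ BU (g • W) := by
      intro hbu
      apply hnotBU_W
      have := hBU_smul g⁻¹ (fun γ hγ => by
        rw [inv_inv]
        exact hgBlk g hg γ hγ) _ hbu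
      rwa [inv_smul_smul] at this
    rw [hRdef] at hgW
    rcases hgW with ((((hgW | hgW) | hgW) | hgW) | hgW)
    · exact absurd (hBU_B _ hgW) hnotBUgW
    · have hcc := hcard_B' _ hgW
      rw [Finset.card_smul_finset] at hcc
      exact absurd hcc hcne
    · obtain ⟨k, hk1, hk2, hk3⟩ := hcard_S _ hgW
      rw [Finset.card_smul_finset] at hk3
      exact absurd (⟨by omega, by omega⟩ : n - d + 1 ≤ c ∧ c ≤ n - 1) hcint
    · obtain ⟨t, ht, he⟩ := hgW
      exact absurd (he ▸ hBU_T t) hnotBUgW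
    · obtain ⟨a, haG, hae⟩ := hgW
      have hstab : (a⁻¹ * g) • W = W := by
        rw [mul_smul, hae, inv_smul_smul]
      have hmem' : a⁻¹ * g ∈ invGroup R :=
        (invGroup R).mul_mem ((invGroup R).inv_mem (hGsub a haG)) hg
      have h1' : a⁻¹ * g = 1 := hreg _ hmem' hstab
      have : g = a := by
        have := congrArg (fun x => a * x) h1'
        simpa [← mul_assoc] using this
      rw [this]
      exact haG
end

section
/- Let Δ be a finite set of size d and let K = G(R^Δ) be a primitive permutation group on Δ, where R^Δ is a nonempty unordered relation on Δ all of whose members y satisfy 2 ≤ |y| ≤ d − 2. Let Σ be a finite set of size s ≥ 1, and for each i ∈ Σ let R^{Δ_i} = {y × {i} : y ∈ R^Δ} be the copy of R^Δ on the fiber Δ × {i} ⊆ Δ × Σ. Then the invariance group of the relation R = ⋃_{i ∈ Σ} R^{Δ_i} on Δ × Σ equals the imprimitive wreath product K ≀ Sym(Σ); that is, G(R) = K ≀ Sym(Σ). -/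
open Pointwise MulAction

/-- The imprimitive wreath product `K ≀ L` as a subgroup of `Sym (Δ × Γ)`:
all permutations `g` of `Δ × Γ` of the form `g (δ, i) = (k_i δ, σ i)`
with `σ ∈ L` and each `k_i ∈ K`. -/
def wreathProduct {Δ Γ : Type*} (K : Subgroup (Equiv.Perm Δ)) (L : Subgroup (Equiv.Perm Γ)) :
    Subgroup (Equiv.Perm (Δ × Γ)) where
  carrier := {g | ∃ σ ∈ L, ∃ k : Γ → Equiv.Perm Δ, (∀ i, k i ∈ K) ∧
      ∀ p : Δ × Γ, g p = (k p.2 p.1, σ p.2)}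
  one_mem' := ⟨1, L.one_mem, fun _ => 1, fun _ => K.one_mem, fun _ => rfl⟩
  mul_mem' := by
    rintro a b ⟨σa, hσa, ka, hka, ha⟩ ⟨σb, hσb, kb, hkb, hb⟩
    refine ⟨σa * σb, L.mul_mem hσa hσb, fun i => ka (σb i) * kb i,
      fun i => K.mul_mem (hka _) (hkb _), fun p => ?_⟩
    have : (a * b) p = a (b p) := rfl
    rw [this, hb p, ha]
    rfl
  inv_mem' := by
    rintro g ⟨σ, hσ, k, hk, hg⟩
    refine ⟨σ⁻¹, L.inv_mem hσ, fun i => (k (σ⁻¹ i))⁻¹, fun i => K.inv_mem (hk _), fun p => ?_⟩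
    apply g.injective
    rw [show g (g⁻¹ p) = p from by simp, hg]
    simp

theorem Equiv.Perm.apply_inv_self {α : Type*} (f : Equiv.Perm α) (x : α) : f (f⁻¹ x) = x := by
  simp

theorem Equiv.Perm.inv_apply_self {α : Type*} (f : Equiv.Perm α) (x : α) : f⁻¹ (f x) = x := by
  simp

/-- Membership in `invGroup` unfolded. -/
lemma mem_invGroup_iff {Ω : Type*} [Fintype Ω] [DecidableEq Ω] (R : Set (Finset Ω))
    (g : Equiv.Perm Ω) : g ∈ invGroup R ↔ ∀ x ∈ R, g • x ∈ R := Iff.rfl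

/-- In a primitive relation group setting, the hypergraph of the relation is connected. -/
lemma connected_of_primitive {Δ : Type*} [Fintype Δ] [DecidableEq Δ]
    (K : Subgroup (Equiv.Perm Δ)) (RΔ : Set (Finset Δ)) (hne : RΔ.Nonempty)
    (hsize : ∀ y ∈ RΔ, 2 ≤ y.card)
    (hK : K = invGroup RΔ) (hprim : IsPrimitivePermGroup K)
    (a b : Δ) : Relation.ReflTransGen (fun u v => ∃ y ∈ RΔ, u ∈ y ∧ v ∈ y) a b := by
  set r : Δ → Δ → Prop := fun u v => ∃ y ∈ RΔ, u ∈ y ∧ v ∈ y with hr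
  have hsymm : Symmetric r := by
    rintro u v ⟨y, hy, hu, hv⟩; exact ⟨y, hy, hv, hu⟩
  have hEsymm : Symmetric (Relation.ReflTransGen r) := by
    haveI : Std.Symm r := ⟨hsymm⟩
    exact fun x y h => Std.Symm.symm x y h
  -- equivariance
  have hKr : ∀ k : Equiv.Perm Δ, k ∈ K → ∀ u v, r u v → r (k u) (k v) := by
    rintro k hk u v ⟨y, hy, hu, hv⟩
    rw [hK] at hk
    exact ⟨k • y, hk y hy, Finset.smul_mem_smul_finset hu, Finset.smul_mem_smul_finset hv⟩
  have hKE : ∀ k : Equiv.Perm Δ, k ∈ K → ∀ u v,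
      Relation.ReflTransGen r u v → Relation.ReflTransGen r (k u) (k v) := by
    intro k hk u v h
    exact Relation.ReflTransGen.lift (fun x => k x) (fun p q hpq => hKr k hk p q hpq) _ _ h
  -- every point is covered by some member of RΔ
  have hcov : ∀ d : Δ, ∃ y ∈ RΔ, d ∈ y := by
    intro d
    obtain ⟨y0, hy0⟩ := hne
    have : 0 < y0.card := lt_of_lt_of_le (by norm_num) (hsize y0 hy0)
    obtain ⟨a0, ha0⟩ := Finset.card_pos.mp this
    obtain ⟨k, hk⟩ := (hprim.1).exists_smul_eq a0 d
    refine ⟨(k : Equiv.Perm Δ) • y0, ?_, ?_⟩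
    · have hmem' : (k : Equiv.Perm Δ) ∈ invGroup RΔ := by
        rw [← hK]; exact k.2
      exact hmem' y0 hy0
    · rw [← hk]; exact Finset.smul_mem_smul_finset ha0
  -- the connected component of `a` is a block
  set B : Set Δ := {x | Relation.ReflTransGen r a x} with hB
  have hsmulB : ∀ k : ↥K, k • B = {x | Relation.ReflTransGen r ((k : Equiv.Perm Δ) a) x} := by
    intro k
    ext x
    constructor
    · rintro ⟨b, hb, rfl⟩
      exact hKE k k.2 a b hb
    · intro hx
      refine ⟨(k : Equiv.Perm Δ)⁻¹ x, ?_, by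
        show (k : Equiv.Perm Δ) ((k : Equiv.Perm Δ)⁻¹ x) = x
        exact Equiv.Perm.apply_inv_self _ x⟩
      have := hKE _ (K.inv_mem k.2) _ _ hx
      exact (by simpa [Equiv.Perm.smul_def] using this : Relation.ReflTransGen r a _)
  have hblock : MulAction.IsBlock ↥K B := by
    rw [MulAction.isBlock_iff_smul_eq_or_disjoint]
    intro k
    rw [hsmulB k]
    by_cases h : Relation.ReflTransGen r a ((k : Equiv.Perm Δ) a)
    · left
      ext x
      exact ⟨fun hx => h.trans hx, fun hx => (hEsymm h).trans hx⟩
    · right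
      rw [Set.disjoint_left]
      intro x hx hx'
      exact h (hx'.trans (hEsymm hx))
  rcases hprim.2 B hblock with hsub | huniv
  · exfalso
    obtain ⟨y, hy, hay⟩ := hcov a
    obtain ⟨u, hu, v, hv, huv⟩ := Finset.one_lt_card.mp (lt_of_lt_of_le (by norm_num) (hsize y hy))
    have hmem : ∀ w ∈ y, w ∈ B := fun w hw =>
      Relation.ReflTransGen.single ⟨y, hy, hay, hw⟩
    exact huv (hsub (hmem u hu) (hmem v hv))
  · have : b ∈ B := huniv ▸ Set.mem_univ b
    exact this

/-- Let `K = G(RΔ)` be a primitive group on `Δ`, where the nonempty relation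
`RΔ` has all members of size between `2` and `|Δ| - 2`, and let `Γ` be nonempty.
Then the invariance group of the relation on `Δ × Γ` consisting of the copies
`y × {i}` (`y ∈ RΔ`, `i ∈ Γ`) of the members of `RΔ` on the fibers is exactly
the imprimitive wreath product `K ≀ Sym(Γ)`. -/
theorem invGroup_fiber_copies_eq_wreathProduct {Δ Γ : Type*}
    [Fintype Δ] [DecidableEq Δ] [Fintype Γ] [DecidableEq Γ]
    (K : Subgroup (Equiv.Perm Δ)) (RΔ : Set (Finset Δ)) (hne : RΔ.Nonempty)
    (hsize : ∀ y ∈ RΔ, 2 ≤ y.card ∧ y.card ≤ Fintype.card Δ - 2)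
    (hK : K = invGroup RΔ) (hprim : IsPrimitivePermGroup K)
    (hΓ : 1 ≤ Fintype.card Γ) :
    invGroup {x : Finset (Δ × Γ) | ∃ i : Γ, ∃ y ∈ RΔ, x = y ×ˢ ({i} : Finset Γ)} =
      wreathProduct K ⊤ := by
  set R : Set (Finset (Δ × Γ)) :=
    {x : Finset (Δ × Γ) | ∃ i : Γ, ∃ y ∈ RΔ, x = y ×ˢ ({i} : Finset Γ)} with hRdef
  -- a helper for computing smul of a fiber product set
  have smul_prod : ∀ (g : Equiv.Perm (Δ × Γ)) (k : Equiv.Perm Δ) (j : Γ) (i : Γ)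
      (y : Finset Δ), (∀ δ : Δ, g (δ, i) = (k δ, j)) →
      g • (y ×ˢ ({i} : Finset Γ)) = (k • y) ×ˢ ({j} : Finset Γ) := by
    intro g k j i y h
    ext p
    simp only [Finset.mem_smul_finset, Finset.mem_product, Finset.mem_singleton,
      Equiv.Perm.smul_def]
    constructor
    · rintro ⟨⟨u, i'⟩, ⟨hu, hi⟩, rfl⟩
      simp only at hu hi
      subst hi
      rw [h u]
      exact ⟨⟨u, hu, rfl⟩, rfl⟩
    · rintro ⟨⟨u, hu, hku⟩, hp2⟩
      refine ⟨(u, i), ⟨hu, rfl⟩, ?_⟩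
      rw [h u, hku, ← hp2]
  apply le_antisymm
  · -- invGroup R ≤ wreath product
    intro g hg
    have hg' : ∀ x ∈ R, g • x ∈ R := hg
    have hginv : ∀ x ∈ R, g⁻¹ • x ∈ R := (invGroup R).inv_mem hg
    -- a base point of Δ
    obtain ⟨y0, hy0⟩ := id hne
    obtain ⟨δ0, hδ0⟩ := Finset.card_pos.mp
      (lt_of_lt_of_le (by norm_num) (hsize y0 hy0).1)
    -- connectivity transfers to fibers
    set relP : (Δ × Γ) → (Δ × Γ) → Prop := fun p q => ∃ x ∈ R, p ∈ x ∧ q ∈ x with hrelP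
    have hfiber : ∀ p q, relP p q → p.2 = q.2 := by
      rintro p q ⟨x, ⟨i, y, hy, rfl⟩, hp, hq⟩
      have hp2 := (Finset.mem_product.mp hp).2
      have hq2 := (Finset.mem_product.mp hq).2
      rw [Finset.mem_singleton] at hp2 hq2
      rw [hp2, hq2]
    have hEfiber : ∀ p q, Relation.ReflTransGen relP p q → p.2 = q.2 := by
      intro p q h
      induction h with
      | refl => rfl
      | tail _ hstep ih => exact ih.trans (hfiber _ _ hstep)
    have hsame : ∀ (δ δ' : Δ) (i : Γ), Relation.ReflTransGen relP (δ, i) (δ', i) := by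
      intro δ δ' i
      have hconn := connected_of_primitive K RΔ hne (fun y hy => (hsize y hy).1) hK hprim δ δ'
      refine Relation.ReflTransGen.lift (fun d => (d, i)) ?_ _ _ hconn
      rintro u v ⟨y, hy, hu, hv⟩
      exact ⟨y ×ˢ ({i} : Finset Γ), ⟨i, y, hy, rfl⟩,
        Finset.mem_product.mpr ⟨hu, Finset.mem_singleton_self i⟩,
        Finset.mem_product.mpr ⟨hv, Finset.mem_singleton_self i⟩⟩
    have hmap : ∀ (g' : Equiv.Perm (Δ × Γ)), (∀ x ∈ R, g' • x ∈ R) →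
        ∀ (δ δ' : Δ) (i : Γ), (g' (δ, i)).2 = (g' (δ', i)).2 := by
      intro g' hg' δ δ' i
      refine hEfiber _ _ (Relation.ReflTransGen.lift (fun p => g' p) ?_ _ _ (hsame δ δ' i))
      rintro p q ⟨x, hx, hp, hq⟩
      refine ⟨g' • x, hg' x hx, ?_, ?_⟩
      · exact Finset.smul_mem_smul_finset hp
      · exact Finset.smul_mem_smul_finset hq
    set σf : Γ → Γ := fun i => (g (δ0, i)).2 with hσf
    set τf : Γ → Γ := fun i => (g⁻¹ (δ0, i)).2 with hτf
    have hσ : ∀ (δ : Δ) (i : Γ), (g (δ, i)).2 = σf i := fun δ i => hmap g hg' δ δ0 i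
    have hτ : ∀ (δ : Δ) (i : Γ), (g⁻¹ (δ, i)).2 = τf i := fun δ i => hmap g⁻¹ hginv δ δ0 i
    have hgpair : ∀ (δ : Δ) (i : Γ), g (δ, i) = ((g (δ, i)).1, σf i) := by
      intro δ i; exact Prod.ext rfl (hσ δ i)
    have hgpair' : ∀ (δ : Δ) (i : Γ), g⁻¹ (δ, i) = ((g⁻¹ (δ, i)).1, τf i) := by
      intro δ i; exact Prod.ext rfl (hτ δ i)
    have hli : ∀ i, τf (σf i) = i := by
      intro i
      have h1 : g⁻¹ ((g (δ0, i)).1, σf i) = (δ0, i) := by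
        rw [← hgpair δ0 i, Equiv.Perm.inv_apply_self]
      calc τf (σf i) = (g⁻¹ ((g (δ0, i)).1, σf i)).2 := (hτ _ _).symm
        _ = i := by rw [h1]
    have hri : ∀ i, σf (τf i) = i := by
      intro i
      have h1 : g ((g⁻¹ (δ0, i)).1, τf i) = (δ0, i) := by
        rw [← hgpair' δ0 i, Equiv.Perm.apply_inv_self]
      calc σf (τf i) = (g ((g⁻¹ (δ0, i)).1, τf i)).2 := (hσ _ _).symm
        _ = i := by rw [h1]
    set σ : Equiv.Perm Γ := ⟨σf, τf, hli, hri⟩ with hσdef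
    -- the fiber components
    have hkli : ∀ (i : Γ) (δ : Δ), (g⁻¹ ((g (δ, i)).1, σf i)).1 = δ := by
      intro i δ
      rw [← hgpair δ i, Equiv.Perm.inv_apply_self]
    have hkri : ∀ (i : Γ) (δ : Δ), (g ((g⁻¹ (δ, σf i)).1, i)).1 = δ := by
      intro i δ
      have h2 : (g⁻¹ (δ, σf i)) = ((g⁻¹ (δ, σf i)).1, i) := by
        rw [hgpair' δ (σf i), hli]
      rw [← h2, Equiv.Perm.apply_inv_self]
    set k : Γ → Equiv.Perm Δ := fun i =>
      ⟨fun δ => (g (δ, i)).1, fun δ => (g⁻¹ (δ, σf i)).1, hkli i, hkri i⟩ with hkdef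
    have hgform : ∀ (δ : Δ) (i : Γ), g (δ, i) = (k i δ, σf i) := fun δ i => hgpair δ i
    have hkK : ∀ i, k i ∈ K := by
      intro i
      rw [hK]
      intro y hy
      have hmem : (y ×ˢ ({i} : Finset Γ)) ∈ R := ⟨i, y, hy, rfl⟩
      obtain ⟨j, y', hy', heq⟩ := hg' _ hmem
      rw [smul_prod g (k i) (σf i) i y (fun δ => hgform δ i)] at heq
      -- conclude k i • y = y'
      obtain ⟨u, hu⟩ := Finset.card_pos.mp (lt_of_lt_of_le (by norm_num) (hsize y hy).1)
      have hu' : (k i u, σf i) ∈ (k i • y) ×ˢ ({σf i} : Finset Γ) :=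
        Finset.mem_product.mpr ⟨Finset.smul_mem_smul_finset hu, Finset.mem_singleton_self _⟩
      rw [heq] at hu'
      have hj' : σf i = j := (Finset.mem_singleton.mp (Finset.mem_product.mp hu').2)
      have : k i • y = y' := by
        ext w
        constructor
        · intro hw
          have : (w, σf i) ∈ (k i • y) ×ˢ ({σf i} : Finset Γ) :=
            Finset.mem_product.mpr ⟨hw, Finset.mem_singleton_self _⟩
          rw [heq] at this
          exact (Finset.mem_product.mp this).1
        · intro hw
          have : (w, σf i) ∈ y' ×ˢ ({j} : Finset Γ) :=
            Finset.mem_product.mpr ⟨hw, Finset.mem_singleton.mpr hj'⟩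
          rw [← heq] at this
          exact (Finset.mem_product.mp this).1
      rw [this]
      exact hy'
    exact ⟨σ, trivial, k, hkK, fun p => hgform p.1 p.2⟩
  · -- wreath product ≤ invGroup R
    rintro g ⟨σ, -, k, hk, hgp⟩
    rintro x ⟨i, y, hy, rfl⟩
    refine ⟨σ i, (k i) • y, ?_, ?_⟩
    · have := hk i
      rw [hK] at this
      exact this y hy
    · exact smul_prod g (k i) (σ i) i y (fun δ => hgp (δ, i))
end
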